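/- For every integer k ≥ 4 and every prime power q with q ≥ k−2, there exists a q-divisible [q² + q − 1, k, q² − (k−3)q]_q linear code. -/

import Mathlib

set_option linter.unusedSectionVars false

open Finset Polynomial



/-- `C` is an `[n, k, d]_q` linear code over `F`: a `k`-dimensional `F`-linear subspace of
`F^n` such that the minimum Hamming weight of a nonzero codeword equals `d`. -/
def IsLinearCodeWith (F : Type) [Field F] [DecidableEq F] (n k d : ℕ)
    (C : Submodule F (Fin n → F)) : Prop :=
  Module.finrank F C = k ∧
  (∀ c ∈ C, c ≠ 0 → d ≤ hammingNorm c) ∧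
  (∃ c ∈ C, c ≠ 0 ∧ hammingNorm c = d)




section Helpers

variable {F : Type} [Field F] [Fintype F] [DecidableEq F] {q : ℕ}

omit [Fintype F] in
lemma affine_root_iff (P Q : F) (hQ : Q ≠ 0) (t : F) : P + t * Q = 0 ↔ t = -P * Q⁻¹ := by
  constructor
  · intro h
    have h1 : t * Q = -P := by linear_combination h
    field_simp
    linear_combination h1
  · rintro rfl
    field_simp
    ring

lemma count_affine_ne (hF : Fintype.card F = q) (P Q : F) :
    (∑ t : F, if P + t * Q ≠ 0 then 1 else 0) =
      if Q = 0 then (if P = 0 then 0 else q) else q - 1 := by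
  rw [← Finset.card_filter]
  by_cases hQ : Q = 0
  · subst hQ
    by_cases hP : P = 0 <;> simp [hP, hF, Finset.filter_true_of_mem, Finset.card_univ]
  · have hset : (Finset.univ.filter fun t : F => P + t * Q ≠ 0)
        = Finset.univ.erase (-P * Q⁻¹) := by
      ext t
      simp only [Finset.mem_filter, Finset.mem_univ, true_and, Finset.mem_erase, and_true]
      exact not_iff_not.mpr (affine_root_iff P Q hQ t)
    rw [hset, Finset.card_erase_of_mem (Finset.mem_univ _), Finset.card_univ, hF]
    simp [hQ]

lemma count_affine_ne' (hF : Fintype.card F = q) (P Q : F) :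
    (∑ t : F, if P + Q * t ≠ 0 then 1 else 0) =
      if Q = 0 then (if P = 0 then 0 else q) else q - 1 := by
  have h : ∀ t : F, P + Q * t = P + t * Q := fun t => by ring
  simp_rw [h]
  exact count_affine_ne hF P Q

lemma count_block (hF : Fintype.card F = q) (P Q : F) :
    (∑ o : Option F, if (o.elim Q fun t => P + t * Q) ≠ 0 then 1 else 0)
      = if P = 0 ∧ Q = 0 then 0 else q := by
  have hq : 1 ≤ q := by rw [← hF]; exact Fintype.card_pos
  rw [Fintype.sum_option]
  simp only [Option.elim]
  erw [count_affine_ne hF P Q]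
  by_cases hQ : Q = 0
  · by_cases hP : P = 0 <;> simp [hP, hQ]
  · simp [hQ]
    omega

omit [Field F] [Fintype F] in
lemma hammingNorm_comp_equiv {ι κ : Type} [Fintype ι] [Fintype κ] [Zero F] (e : κ ≃ ι) (v : ι → F) :
    hammingNorm (v ∘ e) = hammingNorm v := by
  simp only [hammingNorm, Function.comp]
  apply Finset.card_bij (fun a _ => e a)
  · intro a ha
    simpa using (Finset.mem_filter.mp ha).2
  · intro a _ b _ h
    exact e.injective h
  · intro b hb
    refine ⟨e.symm b, ?_, by simp⟩
    simp only [Finset.mem_filter, Finset.mem_univ, true_and] at hb ⊢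
    simpa using hb

lemma card_filter_fin_lt {n c : ℕ} (h : c ≤ n) :
    ((Finset.univ : Finset (Fin n)).filter fun i : Fin n => (i : ℕ) < c).card = c := by
  have himg : (((Finset.univ : Finset (Fin n)).filter fun i : Fin n => (i : ℕ) < c).image Fin.val)
      = Finset.range c := by
    ext m
    simp only [Finset.mem_image, Finset.mem_filter, Finset.mem_univ, true_and, Finset.mem_range]
    constructor
    · rintro ⟨a, h1, rfl⟩; exact h1
    · intro hm; exact ⟨⟨m, lt_of_lt_of_le hm h⟩, hm, rfl⟩
  calc ((Finset.univ : Finset (Fin n)).filter fun i : Fin n => (i : ℕ) < c).card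
      = (((Finset.univ : Finset (Fin n)).filter fun i : Fin n => (i : ℕ) < c).image Fin.val).card :=
        (Finset.card_image_of_injective _ Fin.val_injective).symm
    _ = (Finset.range c).card := by rw [himg]
    _ = c := Finset.card_range c

omit [Fintype F] in
lemma count_roots_le {n m : ℕ} (p : F[X]) (hp : p ≠ 0) (hdeg : p.natDegree ≤ m)
    (z : Fin n → F) (hz : Function.Injective z) :
    ((Finset.univ : Finset (Fin n)).filter fun i => p.eval (z i) = 0).card ≤ m := by
  set s := (Finset.univ : Finset (Fin n)).filter fun i => p.eval (z i) = 0 with hs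
  have h1 : (s.image z).card = s.card := Finset.card_image_of_injective _ hz
  have h2 : s.image z ⊆ p.roots.toFinset := by
    intro a ha
    rw [Multiset.mem_toFinset, Polynomial.mem_roots hp]
    obtain ⟨i, hi, rfl⟩ := Finset.mem_image.mp ha
    exact (Finset.mem_filter.mp hi).2
  calc s.card = (s.image z).card := h1.symm
    _ ≤ p.roots.toFinset.card := Finset.card_le_card h2
    _ ≤ Multiset.card p.roots := Multiset.toFinset_card_le _
    _ ≤ p.natDegree := Polynomial.card_roots' p
    _ ≤ m := hdeg

/-- generic assembly of the code from a parametrized family of codewords -/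
lemma assemble {ι : Type} [Fintype ι] {k n d : ℕ} (hn : Fintype.card ι = n)
    (G : (Fin k → F) →ₗ[F] (ι → F))
    (hdvd : ∀ x, q ∣ hammingNorm (G x))
    (hlb : ∀ x, x ≠ 0 → d ≤ hammingNorm (G x))
    (hd0 : 0 < d)
    (hex : ∃ x, hammingNorm (G x) = d) :
    ∃ C : Submodule F (Fin n → F),
      (Module.finrank F C = k ∧
       (∀ c ∈ C, c ≠ 0 → d ≤ hammingNorm c) ∧
       (∃ c ∈ C, c ≠ 0 ∧ hammingNorm c = d)) ∧
      ∀ c ∈ C, q ∣ hammingNorm c := by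
  have e : ι ≃ Fin n := Fintype.equivFinOfCardEq hn
  set G' := (LinearMap.funLeft F F e.symm).comp G with hG'
  have hnorm : ∀ x, hammingNorm (G' x) = hammingNorm (G x) := by
    intro x
    have : G' x = (G x) ∘ e.symm := by
      funext j; simp [hG', LinearMap.funLeft_apply]
    rw [this, hammingNorm_comp_equiv]
  have hnz : ∀ x, x ≠ 0 → G' x ≠ 0 := by
    intro x hx h0
    have h1 : d ≤ hammingNorm (G' x) := by rw [hnorm]; exact hlb x hx
    rw [h0] at h1
    simp [hammingNorm] at h1
    omega
  have hinj : Function.Injective G' := by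
    rw [← LinearMap.ker_eq_bot, LinearMap.ker_eq_bot']
    intro x hx
    by_contra h
    exact hnz x h hx
  refine ⟨LinearMap.range G', ⟨?_, ?_, ?_⟩, ?_⟩
  · rw [LinearMap.finrank_range_of_inj hinj]
    simp [Module.finrank_pi]
  · rintro c ⟨x, rfl⟩ hc
    have hx : x ≠ 0 := by rintro rfl; simp at hc
    rw [hnorm]; exact hlb x hx
  · obtain ⟨x, hx⟩ := hex
    refine ⟨G' x, ⟨x, rfl⟩, ?_, by rw [hnorm]; exact hx⟩
    apply hnz
    rintro rfl
    rw [map_zero] at hx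
    simp [hammingNorm] at hx
    omega
  · rintro c ⟨x, rfl⟩
    rw [hnorm]; exact hdvd x

end Helpers


section K4

variable {F : Type} [Field F] [Fintype F] [DecidableEq F]

def val4 (q : ℕ) (x : Fin 4 → F) : (F × F) ⊕ Fin (q - 1) → F :=
  Sum.elim (fun ts => (x 0 + x 1 * ts.1) + ts.2 * (x 2 + x 3 * ts.1)) (fun _ => x 3)

def G4 (q : ℕ) : (Fin 4 → F) →ₗ[F] ((F × F) ⊕ Fin (q - 1) → F) where
  toFun := val4 q
  map_add' x y := by
    funext z
    rcases z with ⟨t, s⟩ | j <;> simp [val4] <;> ring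
  map_smul' a x := by
    funext z
    rcases z with ⟨t, s⟩ | j <;> simp [val4] <;> ring

variable {q : ℕ}

lemma norm_val4 (hF : Fintype.card F = q) (x : Fin 4 → F) :
    hammingNorm (val4 q x) =
      (∑ t : F, if x 2 + x 3 * t = 0 then (if x 0 + x 1 * t = 0 then 0 else q) else q - 1)
        + (if x 3 = 0 then 0 else q - 1) := by
  simp only [hammingNorm]
  rw [Finset.card_filter, Fintype.sum_sum_type]
  congr 1
  · rw [Fintype.sum_prod_type]
    refine Finset.sum_congr rfl fun t _ => ?_
    have h := count_affine_ne hF (x 0 + x 1 * t) (x 2 + x 3 * t)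
    simp only [val4, Sum.elim_inl]
    erw [h]
  · by_cases h3 : x 3 = 0 <;> simp [val4, h3, Finset.card_univ]

lemma qsq_aux (hq : 2 ≤ q) : (q - 1) * (q - 1) + (q - 1) = q ^ 2 - q ∧ (q - 1) * q = q ^ 2 - q
    ∧ q * (q - 1) = q ^ 2 - q := by
  obtain ⟨a, rfl⟩ : ∃ a, q = a + 2 := ⟨q - 2, by omega⟩
  simp only [pow_two]
  have h1 : a + 2 - 1 = a + 1 := by omega
  rw [h1]
  have e1 : (a + 2) * (a + 2) = (a+1)*(a+1) + (a+1) + (a+2) := by ring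
  have e2 : (a + 2) * (a + 2) = (a+1)*(a+2) + (a+2) := by ring
  have e3 : (a + 2) * (a + 2) = (a+2)*(a+1) + (a+2) := by ring
  omega

lemma norm_val4_dvd_lb (hF : Fintype.card F = q) (hq : 2 ≤ q) (x : Fin 4 → F) (hx : x ≠ 0) :
    q ∣ hammingNorm (val4 q x) ∧ q ^ 2 - q ≤ hammingNorm (val4 q x) := by
  obtain ⟨e1, e2, e3⟩ := qsq_aux hq
  have hqq : q * q = q ^ 2 := (pow_two q).symm
  rw [norm_val4 hF]
  by_cases h3 : x 3 = 0
  · rw [if_pos h3, add_zero]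
    by_cases h2 : x 2 = 0
    · have hrow : (∑ t : F, if x 2 + x 3 * t = 0 then (if x 0 + x 1 * t = 0 then 0 else q) else q - 1)
          = q * (∑ t : F, if x 0 + x 1 * t ≠ 0 then 1 else 0) := by
        rw [Finset.mul_sum]
        refine Finset.sum_congr rfl fun t _ => ?_
        rw [if_pos (by simp [h2, h3])]
        by_cases h0 : x 0 + x 1 * t = 0 <;> simp [h0]
      rw [hrow, count_affine_ne' hF (x 0) (x 1)]
      by_cases h1 : x 1 = 0
      · have h0 : x 0 ≠ 0 := by
          intro h0
          apply hx
          funext i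
          fin_cases i <;> assumption
        rw [if_pos h1, if_neg h0]
        exact ⟨dvd_mul_right q q, by omega⟩
      · rw [if_neg h1]
        exact ⟨dvd_mul_right q (q-1), by omega⟩
    · have hrow : (∑ t : F, if x 2 + x 3 * t = 0 then (if x 0 + x 1 * t = 0 then 0 else q) else q - 1)
          = q * (q - 1) := by
        have h : ∀ t : F, (if x 2 + x 3 * t = 0 then (if x 0 + x 1 * t = 0 then 0 else q) else q - 1) = q - 1 := by
          intro t
          rw [if_neg (by simp [h3, h2])]
        rw [Finset.sum_congr rfl fun t _ => h t, Finset.sum_const, Finset.card_univ, hF,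
          smul_eq_mul]
      rw [hrow]
      exact ⟨dvd_mul_right q (q-1), by omega⟩
  · rw [if_neg h3]
    set t₀ := -(x 2) * (x 3)⁻¹ with ht₀
    have hc : ∀ t : F, (x 2 + x 3 * t = 0) ↔ t = t₀ := by
      intro t
      have h := affine_root_iff (x 2) (x 3) h3 t
      rw [mul_comm (x 3) t]
      exact h
    have hsum : (∑ t : F, if x 2 + x 3 * t = 0 then (if x 0 + x 1 * t = 0 then 0 else q) else q - 1)
        = (if x 0 + x 1 * t₀ = 0 then 0 else q) + (q - 1) * (q - 1) := by
      rw [← Finset.add_sum_erase _ _ (Finset.mem_univ t₀)]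
      congr 1
      · rw [if_pos ((hc t₀).mpr rfl)]
      · have h : ∀ t ∈ Finset.univ.erase t₀,
            (if x 2 + x 3 * t = 0 then (if x 0 + x 1 * t = 0 then 0 else q) else q - 1) = q - 1 := by
          intro t ht
          rw [if_neg]
          rw [hc t]
          exact (Finset.mem_erase.mp ht).1
        rw [Finset.sum_congr rfl h, Finset.sum_const,
          Finset.card_erase_of_mem (Finset.mem_univ _), Finset.card_univ, hF, smul_eq_mul]
    rw [hsum]
    by_cases h0 : x 0 + x 1 * t₀ = 0
    · rw [if_pos h0]
      have hval : 0 + (q - 1) * (q - 1) + (q - 1) = q ^ 2 - q := by omega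
      rw [hval]
      refine ⟨?_, le_refl _⟩
      rw [← e2]
      exact dvd_mul_left q (q-1)
    · rw [if_neg h0]
      have hval : q + (q - 1) * (q - 1) + (q - 1) = q ^ 2 := by omega
      rw [hval]
      refine ⟨?_, by omega⟩
      rw [← hqq]
      exact dvd_mul_right q q

lemma norm_val4_exact (hF : Fintype.card F = q) (hq : 2 ≤ q) :
    hammingNorm (val4 q (fun i : Fin 4 => if i.val = 2 then (1:F) else 0)) = q ^ 2 - q := by
  obtain ⟨e1, e2, e3⟩ := qsq_aux hq
  set x : Fin 4 → F := fun i : Fin 4 => if i.val = 2 then (1:F) else 0 with hxdef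
  have hx0 : x 0 = 0 := by simp [hxdef]
  have hx1 : x 1 = 0 := by simp [hxdef]
  have hx2 : x 2 = 1 := by simp [hxdef]
  have hx3 : x 3 = 0 := by
    simp only [hxdef]
    exact if_neg (by decide)
  rw [norm_val4 hF, hx0, hx1, hx2, hx3]
  have h : ∀ t : F, (if (1:F) + 0 * t = 0 then (if (0:F) + 0 * t = 0 then 0 else q) else q - 1) = q - 1 := by
    intro t; rw [if_neg (by simp)]
  rw [Finset.sum_congr rfl fun t _ => h t, Finset.sum_const, Finset.card_univ, hF, smul_eq_mul,
    if_pos rfl, add_zero, e3]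

set_option maxHeartbeats 1000000 in
lemma exists_code_k4 (q : ℕ) (hq : 2 ≤ q)
    (F : Type) [Field F] [Fintype F] [DecidableEq F] (hF : Fintype.card F = q) :
    ∃ C : Submodule F (Fin (q ^ 2 + q - 1) → F),
      (Module.finrank F C = 4 ∧
       (∀ c ∈ C, c ≠ 0 → q ^ 2 - q ≤ hammingNorm c) ∧
       (∃ c ∈ C, c ≠ 0 ∧ hammingNorm c = q ^ 2 - q)) ∧
      ∀ c ∈ C, q ∣ hammingNorm c := by
  have hqq : q * q = q ^ 2 := (pow_two q).symm
  have hcard : Fintype.card ((F × F) ⊕ Fin (q - 1)) = q ^ 2 + q - 1 := by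
    have hle : q ≤ q * q := Nat.le_mul_of_pos_left q (by omega)
    simp only [Fintype.card_sum, Fintype.card_prod, Fintype.card_fin, hF]
    omega
  have hd0 : 0 < q ^ 2 - q := by
    rw [← hqq]
    obtain ⟨a, rfl⟩ : ∃ a, q = a + 2 := ⟨q - 2, by omega⟩
    have h : (a+2)*(a+2) = a*a + 4*a + 4 := by ring
    omega
  have hdvd : ∀ x : Fin 4 → F, q ∣ hammingNorm ((G4 q) x) := by
    intro x
    by_cases hx : x = 0
    · subst hx
      rw [map_zero]
      simp [hammingNorm]
    · exact (norm_val4_dvd_lb hF hq x hx).1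
  have hlb : ∀ x : Fin 4 → F, x ≠ 0 → q ^ 2 - q ≤ hammingNorm ((G4 q) x) :=
    fun x hx => (norm_val4_dvd_lb hF hq x hx).2
  have hex : ∃ x : Fin 4 → F, hammingNorm ((G4 q) x) = q ^ 2 - q :=
    ⟨(fun i : Fin 4 => if i.val = 2 then (1:F) else 0), norm_val4_exact hF hq⟩
  exact assemble (F := F) (q := q) (ι := (F × F) ⊕ Fin (q - 1)) (k := 4)
      (n := q^2+q-1) (d := q^2-q) hcard (G4 q) hdvd hlb hd0 hex

end K4




section HelpersBis
variable {F : Type} [Field F] [Fintype F] [DecidableEq F] {q : ℕ}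

lemma affine_root_iff' (P Q : F) (hQ : Q ≠ 0) (t : F) : P + t * Q = 0 ↔ t = -P * Q⁻¹ := by
  constructor
  · intro h
    have h1 : t * Q = -P := by linear_combination h
    field_simp
    linear_combination h1
  · rintro rfl
    field_simp
    ring

lemma count_affine_ne2 (hF : Fintype.card F = q) (P Q : F) :
    (∑ t : F, if P + t * Q ≠ 0 then 1 else 0) =
      if Q = 0 then (if P = 0 then 0 else q) else q - 1 := by
  rw [← Finset.card_filter]
  by_cases hQ : Q = 0
  · subst hQ
    by_cases hP : P = 0 <;> simp [hP, hF, Finset.filter_true_of_mem, Finset.card_univ]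
  · have hset : (Finset.univ.filter fun t : F => P + t * Q ≠ 0)
        = Finset.univ.erase (-P * Q⁻¹) := by
      ext t
      simp only [Finset.mem_filter, Finset.mem_univ, true_and, Finset.mem_erase, and_true]
      exact not_iff_not.mpr (affine_root_iff' P Q hQ t)
    rw [hset, Finset.card_erase_of_mem (Finset.mem_univ _), Finset.card_univ, hF]
    simp [hQ]

lemma count_block2 (hF : Fintype.card F = q) (P Q : F) :
    (∑ o : Option F, if (o.elim Q fun t => P + t * Q) ≠ 0 then 1 else 0)
      = if P = 0 ∧ Q = 0 then 0 else q := by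
  have hq : 1 ≤ q := by rw [← hF]; exact Fintype.card_pos
  rw [Fintype.sum_option]
  simp only [Option.elim]
  erw [count_affine_ne2 hF P Q]
  by_cases hQ : Q = 0
  · by_cases hP : P = 0 <;> simp [hP, hQ]
  · simp [hQ]
    omega

lemma count_roots_le2 {n m : ℕ} (p : F[X]) (hp : p ≠ 0) (hdeg : p.natDegree ≤ m)
    (z : Fin n → F) (hz : Function.Injective z) :
    ((Finset.univ : Finset (Fin n)).filter fun i => p.eval (z i) = 0).card ≤ m := by
  set s := (Finset.univ : Finset (Fin n)).filter fun i => p.eval (z i) = 0 with hs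
  have h1 : (s.image z).card = s.card := Finset.card_image_of_injective _ hz
  have h2 : s.image z ⊆ p.roots.toFinset := by
    intro a ha
    rw [Multiset.mem_toFinset, Polynomial.mem_roots hp]
    obtain ⟨i, hi, rfl⟩ := Finset.mem_image.mp ha
    exact (Finset.mem_filter.mp hi).2
  calc s.card = (s.image z).card := h1.symm
    _ ≤ p.roots.toFinset.card := Finset.card_le_card h2
    _ ≤ Multiset.card p.roots := Multiset.toFinset_card_le _
    _ ≤ p.natDegree := Polynomial.card_roots' p
    _ ≤ m := hdeg

lemma card_filter_fin_lt2 {n c : ℕ} (h : c ≤ n) :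
    ((Finset.univ : Finset (Fin n)).filter fun i : Fin n => (i : ℕ) < c).card = c := by
  have himg : (((Finset.univ : Finset (Fin n)).filter fun i : Fin n => (i : ℕ) < c).image Fin.val)
      = Finset.range c := by
    ext m
    simp only [Finset.mem_image, Finset.mem_filter, Finset.mem_univ, true_and, Finset.mem_range]
    constructor
    · rintro ⟨a, h1, rfl⟩; exact h1
    · intro hm; exact ⟨⟨m, lt_of_lt_of_le hm h⟩, hm, rfl⟩
  calc ((Finset.univ : Finset (Fin n)).filter fun i : Fin n => (i : ℕ) < c).card
      = (((Finset.univ : Finset (Fin n)).filter fun i : Fin n => (i : ℕ) < c).image Fin.val).card :=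
        (Finset.card_image_of_injective _ Fin.val_injective).symm
    _ = (Finset.range c).card := by rw [himg]
    _ = c := Finset.card_range c

end HelpersBis

section K5

variable {F : Type} [Field F] [Fintype F] [DecidableEq F]

def xf (k : ℕ) (x : Fin k → F) (j : ℕ) : F := if h : j < k then x ⟨j, h⟩ else 0

lemma xf_add (k : ℕ) (x y : Fin k → F) (j : ℕ) : xf k (x + y) j = xf k x j + xf k y j := by
  unfold xf; split <;> simp

lemma xf_smul (k : ℕ) (a : F) (x : Fin k → F) (j : ℕ) : xf k (a • x) j = a * xf k x j := by
  unfold xf; split <;> simp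

lemma xf_eq_zero (k : ℕ) (x : Fin k → F) (h : ∀ j, xf k x j = 0) : x = 0 := by
  funext i
  have hh := h i.val
  unfold xf at hh
  rw [dif_pos i.isLt] at hh
  simpa [Fin.eta] using hh

def Aev (k q : ℕ) (z : Fin (q-1) → F) (x : Fin k → F) (i : Fin (q-1)) : F :=
  xf k x 0 + xf k x 1 * z i

def Bev (k q : ℕ) (z : Fin (q-1) → F) (cf : ℕ → F) (x : Fin k → F) (i : Fin (q-1)) : F :=
  ∑ j ∈ Finset.range (k-2), xf k x (j+2) * cf j * (z i)^j

lemma Aev_add (k q : ℕ) (z : Fin (q-1) → F) (x y : Fin k → F) (i : Fin (q-1)) :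
    Aev k q z (x + y) i = Aev k q z x i + Aev k q z y i := by
  simp only [Aev, xf_add]; ring

lemma Bev_add (k q : ℕ) (z : Fin (q-1) → F) (cf : ℕ → F) (x y : Fin k → F) (i : Fin (q-1)) :
    Bev k q z cf (x + y) i = Bev k q z cf x i + Bev k q z cf y i := by
  simp only [Bev, xf_add, ← Finset.sum_add_distrib]
  refine Finset.sum_congr rfl fun j _ => by ring

lemma Aev_smul (k q : ℕ) (z : Fin (q-1) → F) (a : F) (x : Fin k → F) (i : Fin (q-1)) :
    Aev k q z (a • x) i = a * Aev k q z x i := by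
  simp only [Aev, xf_smul]; ring

lemma Bev_smul (k q : ℕ) (z : Fin (q-1) → F) (cf : ℕ → F) (a : F) (x : Fin k → F) (i : Fin (q-1)) :
    Bev k q z cf (a • x) i = a * Bev k q z cf x i := by
  simp only [Bev, xf_smul, Finset.mul_sum]
  refine Finset.sum_congr rfl fun j _ => by ring

def valk (k q : ℕ) (z : Fin (q-1) → F) (cf : ℕ → F) (x : Fin k → F) :
    (Fin (q-1) × Option F) ⊕ Fin q → F :=
  Sum.elim
    (fun p => p.2.elim (Bev k q z cf x p.1) (fun t => Aev k q z x p.1 + t * Bev k q z cf x p.1))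
    (fun _ => xf k x (k-1))

def Gk (k q : ℕ) (z : Fin (q-1) → F) (cf : ℕ → F) :
    (Fin k → F) →ₗ[F] ((Fin (q-1) × Option F) ⊕ Fin q → F) where
  toFun := valk k q z cf
  map_add' x y := by
    funext w
    rcases w with ⟨i, o⟩ | j
    · rcases o with _ | t <;> simp [valk, Aev_add, Bev_add] <;> ring
    · simp [valk, xf_add]
  map_smul' a x := by
    funext w
    rcases w with ⟨i, o⟩ | j
    · rcases o with _ | t <;> simp [valk, Aev_smul, Bev_smul] <;> ring
    · simp [valk, xf_smul]

def Dead (k q : ℕ) (z : Fin (q-1) → F) (cf : ℕ → F) (x : Fin k → F) : Finset (Fin (q-1)) :=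
  Finset.univ.filter fun i => Aev k q z x i = 0 ∧ Bev k q z cf x i = 0

variable {q : ℕ}

lemma norm_valk (hF : Fintype.card F = q) (k : ℕ) (z : Fin (q-1) → F) (cf : ℕ → F)
    (x : Fin k → F) :
    hammingNorm (valk k q z cf x) =
      q * (q - ((Dead k q z cf x).card + (if xf k x (k-1) = 0 then 1 else 0))) := by
  have hq1 : 1 ≤ q := by rw [← hF]; exact Fintype.card_pos
  have hD : (Dead k q z cf x).card ≤ q - 1 := by
    calc (Dead k q z cf x).card ≤ (Finset.univ : Finset (Fin (q-1))).card :=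
          Finset.card_le_card (Finset.filter_subset _ _)
    _ = q - 1 := by simp
  simp only [hammingNorm]
  rw [Finset.card_filter, Fintype.sum_sum_type, Fintype.sum_prod_type]
  have hinner : ∀ i : Fin (q-1),
      (∑ o : Option F, if valk k q z cf x (Sum.inl (i, o)) ≠ 0 then 1 else 0)
        = if (Aev k q z x i = 0 ∧ Bev k q z cf x i = 0) then 0 else q := by
    intro i
    have h := count_block2 hF (Aev k q z x i) (Bev k q z cf x i)
    simp only [valk, Sum.elim_inl]
    exact h
  rw [Finset.sum_congr rfl fun i _ => hinner i]
  have hleft : (∑ i : Fin (q-1),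
      if (Aev k q z x i = 0 ∧ Bev k q z cf x i = 0) then 0 else q)
        = q * ((q - 1) - (Dead k q z cf x).card) := by
    rw [Finset.sum_ite, Finset.sum_const, Finset.sum_const, smul_eq_mul, smul_eq_mul, mul_zero,
      zero_add]
    have hcards := Finset.card_filter_add_card_filter_not
      (s := (Finset.univ : Finset (Fin (q-1))))
      (p := fun i => Aev k q z x i = 0 ∧ Bev k q z cf x i = 0)
    simp only [Finset.card_univ, Fintype.card_fin] at hcards
    have hcc : (Finset.univ.filter fun i : Fin (q-1) =>
        ¬(Aev k q z x i = 0 ∧ Bev k q z cf x i = 0)).card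
          = (q-1) - (Dead k q z cf x).card := by
      unfold Dead
      omega
    rw [hcc, mul_comm]
  have hsum2 : (∑ j : Fin q, if valk k q z cf x (Sum.inr j) ≠ 0 then 1 else 0)
      = q * (1 - (if xf k x (k-1) = 0 then 1 else 0)) := by
    simp only [valk, Sum.elim_inr]
    by_cases hL : xf k x (k-1) = 0 <;> simp [hL]
  rw [hleft, hsum2, ← Nat.mul_add]
  have hL1 : (if xf k x (k-1) = 0 then 1 else 0) ≤ 1 := by split <;> omega
  have harith : (q - 1 - (Dead k q z cf x).card) + (1 - (if xf k x (k-1) = 0 then 1 else 0))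
      = q - ((Dead k q z cf x).card + (if xf k x (k-1) = 0 then 1 else 0)) := by omega
  rw [harith]

lemma Zk_le (k : ℕ) (hk : 5 ≤ k) (hkq : k - 2 ≤ q)
    (z : Fin (q-1) → F) (hz : Function.Injective z) (cf : ℕ → F) (hcf : ∀ j, cf j ≠ 0)
    (x : Fin k → F) (hx : x ≠ 0) :
    (Dead k q z cf x).card + (if xf k x (k-1) = 0 then 1 else 0) ≤ k - 3 := by
  by_cases hA : xf k x 0 = 0 ∧ xf k x 1 = 0
  · set p : F[X] := ∑ j ∈ Finset.range (k-2), Polynomial.C (xf k x (j+2) * cf j) * Polynomial.X ^ j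
      with hpdef
    have hco : ∀ n, p.coeff n = if n < k-2 then xf k x (n+2) * cf n else 0 := by
      intro n
      rw [hpdef, Polynomial.finset_sum_coeff]
      simp only [Polynomial.coeff_C_mul, Polynomial.coeff_X_pow, mul_ite, mul_one, mul_zero]
      rw [Finset.sum_ite_eq (Finset.range (k-2)) n (fun j => xf k x (j+2) * cf j)]
      simp [Finset.mem_range]
    have hpne : p ≠ 0 := by
      intro hp0
      apply hx
      apply xf_eq_zero
      have hcz : ∀ j, j < k - 2 → xf k x (j+2) = 0 := by
        intro j hj
        have hcj := hco j
        rw [hp0] at hcj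
        simp only [Polynomial.coeff_zero] at hcj
        rw [if_pos hj] at hcj
        rcases mul_eq_zero.mp hcj.symm with h | h
        · exact h
        · exact absurd h (hcf j)
      intro j
      by_cases hjk : j < k
      · rcases Nat.lt_or_ge j 2 with h2 | h2
        · interval_cases j
          · exact hA.1
          · exact hA.2
        · have hlt : j - 2 < k - 2 := by omega
          have := hcz (j-2) hlt
          rwa [show j - 2 + 2 = j from by omega] at this
      · unfold xf; rw [dif_neg hjk]
    have hdeg : p.natDegree ≤ k-3 := by
      rw [Polynomial.natDegree_le_iff_coeff_eq_zero]
      intro N hN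
      rw [hco N, if_neg (by omega)]
    have hBeval : ∀ i, Bev k q z cf x i = p.eval (z i) := by
      intro i
      rw [Polynomial.eval_eq_sum_range' (n := k-2) (lt_of_le_of_lt hdeg (by omega)) (z i)]
      refine Finset.sum_congr rfl fun j hj => ?_
      rw [hco j, if_pos (Finset.mem_range.mp hj)]
    have hsub : (Dead k q z cf x) ⊆ Finset.univ.filter fun i => p.eval (z i) = 0 := by
      intro i hi
      simp only [Dead, Finset.mem_filter] at hi
      simp only [Finset.mem_filter]
      exact ⟨Finset.mem_univ _, by rw [← hBeval]; exact hi.2.2⟩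
    by_cases hL : xf k x (k-1) = 0
    · have hdeg4 : p.natDegree ≤ k-4 := by
        rw [Polynomial.natDegree_le_iff_coeff_eq_zero]
        intro N hN
        rw [hco N]
        by_cases hNk : N < k-2
        · have hN3 : N = k-3 := by omega
          rw [if_pos hNk, hN3, show k-3+2 = k-1 from by omega, hL, zero_mul]
        · rw [if_neg hNk]
      have hcard := Finset.card_le_card hsub
      have hcount := count_roots_le2 p hpne hdeg4 z hz
      rw [if_pos hL]
      omega
    · rw [if_neg hL]
      have hcard := Finset.card_le_card hsub
      have hcount := count_roots_le2 p hpne hdeg z hz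
      omega
  · have h1 : (Dead k q z cf x).card ≤ 1 := by
      by_cases h1' : xf k x 1 = 0
      · have h0 : xf k x 0 ≠ 0 := fun h0 => hA ⟨h0, h1'⟩
        have hempty : Dead k q z cf x = ∅ := by
          ext i
          simp only [Dead, Finset.mem_filter, Finset.mem_univ, true_and, Finset.notMem_empty,
            iff_false, not_and]
          intro hAi
          exfalso
          apply h0
          simpa [Aev, h1'] using hAi
        simp [hempty]
      · rw [Finset.card_le_one]
        intro a ha b hb
        simp only [Dead, Finset.mem_filter] at ha hb
        have ea : z a = -(xf k x 0) * (xf k x 1)⁻¹ := by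
          apply (affine_root_iff' (xf k x 0) (xf k x 1) h1' (z a)).mp
          have hh := ha.2.1
          rw [Aev, mul_comm (xf k x 1) (z a)] at hh
          exact hh
        have eb : z b = -(xf k x 0) * (xf k x 1)⁻¹ := by
          apply (affine_root_iff' (xf k x 0) (xf k x 1) h1' (z b)).mp
          have hh := hb.2.1
          rw [Aev, mul_comm (xf k x 1) (z b)] at hh
          exact hh
        exact hz (ea.trans eb.symm)
    have hL1 : (if xf k x (k-1) = 0 then 1 else 0) ≤ 1 := by split <;> omega
    omega

end K5

lemma exists_code_ge5 (k q : ℕ) (hk : 5 ≤ k) (hkq : k - 2 ≤ q)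
    (F : Type) [Field F] [Fintype F] [DecidableEq F] (hF : Fintype.card F = q) :
    ∃ C : Submodule F (Fin (q ^ 2 + q - 1) → F),
      (Module.finrank F C = k ∧
       (∀ c ∈ C, c ≠ 0 → q ^ 2 - (k-3) * q ≤ hammingNorm c) ∧
       (∃ c ∈ C, c ≠ 0 ∧ hammingNorm c = q ^ 2 - (k-3) * q)) ∧
      ∀ c ∈ C, q ∣ hammingNorm c := by
  have hq3 : 3 ≤ q := by omega
  have hk3q : k - 3 ≤ q - 1 := by omega
  -- the injective points
  set e : Fin q ≃ F := (Fintype.equivFinOfCardEq hF).symm with hedef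
  set z : Fin (q-1) → F := fun i => e (Fin.castLE (by omega) i) with hzdef
  have hzinj : Function.Injective z := by
    intro a b h
    exact Fin.castLE_injective _ (e.injective h)
  -- the reference polynomial
  set zn : ℕ → F := fun m => if h : m < q - 1 then z ⟨m, h⟩ else 0 with hzndef
  set f0 : F[X] := ∏ m ∈ Finset.range (k-3), (Polynomial.X - Polynomial.C (zn m)) with hf0def
  have hmonic : f0.Monic :=
    Polynomial.monic_prod_of_monic _ _ fun m _ => Polynomial.monic_X_sub_C _
  have hdeg0 : f0.natDegree = k - 3 := by
    rw [hf0def, Polynomial.natDegree_prod_of_monic _ _ fun m _ => Polynomial.monic_X_sub_C _]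
    simp [Polynomial.natDegree_X_sub_C]
  have htop : f0.coeff (k-3) = 1 := by
    have h := hmonic.coeff_natDegree
    rwa [hdeg0] at h
  set cf : ℕ → F := fun j => if f0.coeff j = 0 then 1 else f0.coeff j with hcfdef
  have hcf : ∀ j, cf j ≠ 0 := by
    intro j
    simp only [hcfdef]
    split
    · exact one_ne_zero
    · assumption
  have hcftop : cf (k-3) = 1 := by
    simp only [hcfdef, htop]
    norm_num
  -- the minimum weight parameter vector
  set x0 : Fin k → F :=
    fun i => if i.val < 2 then 0 else (if f0.coeff (i.val - 2) = 0 then 0 else 1) with hx0def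
  have hx0xf : ∀ (j : ℕ) (hj : j < k), xf k x0 j = x0 ⟨j, hj⟩ := by
    intro j hj
    unfold xf
    rw [dif_pos hj]
  have hx0A : xf k x0 0 = 0 := by
    rw [hx0xf 0 (by omega), hx0def]
    norm_num
  have hx0A1 : xf k x0 1 = 0 := by
    rw [hx0xf 1 (by omega), hx0def]
    norm_num
  have hx0B : ∀ j, j < k - 2 → xf k x0 (j+2) * cf j = f0.coeff j := by
    intro j hj
    rw [hx0xf (j+2) (by omega), hx0def]
    simp only
    rw [if_neg (by omega : ¬ (j + 2 < 2)), show j + 2 - 2 = j from by omega]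
    by_cases hc : f0.coeff j = 0
    · rw [if_pos hc, zero_mul, hc]
    · rw [if_neg hc, one_mul, hcfdef]
      simp only
      rw [if_neg hc]
  have hx0lam : xf k x0 (k-1) = 1 := by
    rw [hx0xf (k-1) (by omega), hx0def]
    simp only
    rw [if_neg (by omega : ¬ (k - 1 < 2)), show k - 1 - 2 = k - 3 from by omega, htop]
    norm_num
  have hx0ne : x0 ≠ 0 := by
    intro h
    have h1 := hx0lam
    rw [h] at h1
    have h2 : xf k (0 : Fin k → F) (k-1) = 0 := by
      unfold xf
      split <;> simp
    rw [h2] at h1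
    exact one_ne_zero h1.symm
  have hBev0 : ∀ i, Bev k q z cf x0 i = f0.eval (z i) := by
    intro i
    rw [Polynomial.eval_eq_sum_range' (n := k-2) (by omega : f0.natDegree < k - 2) (z i)]
    refine Finset.sum_congr rfl fun j hj => ?_
    rw [← hx0B j (Finset.mem_range.mp hj)]
  have hroots : ∀ i : Fin (q-1), (f0.eval (z i) = 0) ↔ ((i : ℕ) < k - 3) := by
    intro i
    rw [hf0def, Polynomial.eval_prod, Finset.prod_eq_zero_iff]
    simp only [Polynomial.eval_sub, Polynomial.eval_X, Polynomial.eval_C, Finset.mem_range,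
      sub_eq_zero]
    constructor
    · rintro ⟨m, hm, hzm⟩
      have hmq : m < q - 1 := by omega
      have hznm : zn m = z ⟨m, hmq⟩ := by
        simp only [hzndef]
        rw [dif_pos hmq]
      rw [hznm] at hzm
      have hieq := hzinj hzm
      rw [hieq]
      simpa using hm
    · intro hi
      refine ⟨(i : ℕ), hi, ?_⟩
      have hmq : (i : ℕ) < q - 1 := i.isLt
      simp only [hzndef]
      rw [dif_pos hmq]
  have hDead0 : (Dead k q z cf x0).card = k - 3 := by
    have hset : Dead k q z cf x0
        = Finset.univ.filter fun i : Fin (q-1) => (i : ℕ) < k - 3 := by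
      ext i
      simp only [Dead, Finset.mem_filter, Finset.mem_univ, true_and]
      rw [Aev, hx0A, hx0A1, hBev0 i, hroots i]
      simp
    rw [hset]
    exact card_filter_fin_lt2 hk3q
  -- cardinality of the index type
  have hcard : Fintype.card ((Fin (q-1) × Option F) ⊕ Fin q) = q ^ 2 + q - 1 := by
    simp only [Fintype.card_sum, Fintype.card_prod, Fintype.card_fin, Fintype.card_option, hF]
    obtain ⟨a, rfl⟩ : ∃ a, q = a + 3 := ⟨q - 3, by omega⟩
    have h1 : a + 3 - 1 = a + 2 := by omega
    rw [h1, pow_two]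
    have h2 : (a+2) * (a+3+1) = a*a + 6*a + 8 := by ring
    have h3 : (a+3) * (a+3) = a*a + 6*a + 9 := by ring
    omega
  -- the distance identity
  have hdq : q * (q - (k-3)) = q ^ 2 - (k-3) * q := by
    rw [mul_comm, Nat.sub_mul, pow_two]
  have hd0 : 0 < q ^ 2 - (k-3) * q := by
    rw [← hdq]
    have h1 : 1 ≤ q - (k-3) := by omega
    calc 0 < q * 1 := by omega
    _ ≤ q * (q - (k-3)) := Nat.mul_le_mul_left q h1
  -- the three hypotheses for assembly
  have hdvd : ∀ x : Fin k → F, q ∣ hammingNorm ((Gk k q z cf) x) := by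
    intro x
    rw [show ((Gk k q z cf) x) = valk k q z cf x from rfl, norm_valk hF]
    exact Dvd.intro _ rfl
  have hlb : ∀ x : Fin k → F, x ≠ 0 → q ^ 2 - (k-3) * q ≤ hammingNorm ((Gk k q z cf) x) := by
    intro x hx
    rw [show ((Gk k q z cf) x) = valk k q z cf x from rfl, norm_valk hF, ← hdq]
    apply Nat.mul_le_mul_left
    apply Nat.sub_le_sub_left
    exact Zk_le k hk hkq z hzinj cf hcf x hx
  have hex : ∃ x : Fin k → F, hammingNorm ((Gk k q z cf) x) = q ^ 2 - (k-3) * q := by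
    refine ⟨x0, ?_⟩
    rw [show ((Gk k q z cf) x0) = valk k q z cf x0 from rfl, norm_valk hF, ← hdq, hDead0,
      hx0lam]
    rw [if_neg one_ne_zero, add_zero]
  exact assemble (F := F) (q := q) (ι := (Fin (q-1) × Option F) ⊕ Fin q) (k := k)
      (n := q^2+q-1) (d := q^2-(k-3)*q) hcard (Gk k q z cf) hdvd hlb hd0 hex


/-- For every integer `k ≥ 4` and every prime power `q ≥ k - 2`, there exists a
`q`-divisible `[q² + q - 1, k, q² - (k-3)q]_q` code. -/
theorem statement4 (k q : ℕ) (hk : 4 ≤ k) (hq : IsPrimePow q) (hkq : k - 2 ≤ q)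
    (F : Type) [Field F] [Fintype F] [DecidableEq F] (hF : Fintype.card F = q) :
    ∃ C : Submodule F (Fin (q ^ 2 + q - 1) → F),
      IsLinearCodeWith F (q ^ 2 + q - 1) k (q ^ 2 - (k - 3) * q) C ∧
      ∀ c ∈ C, q ∣ hammingNorm c := by
  unfold IsLinearCodeWith
  rcases Nat.lt_or_ge k 5 with h5 | h5
  · have hk4 : k = 4 := by omega
    subst hk4
    have hq2 : 2 ≤ q := by simpa using hkq
    have hdd : q ^ 2 - (4 - 3) * q = q ^ 2 - q := by norm_num
    rw [hdd]
    exact exists_code_k4 q hq2 F hF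
  · exact exists_code_ge5 k q h5 hkq F hF
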